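/- Let Σ be a d×d real symmetric positive definite matrix, U a d×m real matrix with UᵀΣU = I_m, and M an m×m real symmetric positive definite matrix. Then: (i) for every d×m real matrix η̄ there exists a unique symmetric m×m matrix S satisfying the Lyapunov equation M⁻¹S + SM⁻¹ = UᵀΣη̄ + η̄ᵀΣU; (ii) the matrix ξ := η̄ − U S M⁻¹ satisfies UᵀΣξ + ξᵀΣU = 0 (i.e., ξ lies in the tangent space of the generalized Stiefel manifold at U); (iii) for every d×m real matrix ζ with UᵀΣζ + ζᵀΣU = 0, one has trace((U S M⁻¹)ᵀ Σ ζ M) = 0, i.e., the normal component U S M⁻¹ is orthogonal to every tangent vector with respect to the preconditioned inner product g(ξ, η) := trace(ξᵀ Σ η M). -/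

import Mathlib

open Matrix

theorem diag_conj_nonneg {n : ℕ} (P : Matrix (Fin n) (Fin n) ℝ) (hP : P.PosDef) {k : ℕ}
    (X : Matrix (Fin n) (Fin k) ℝ) (j : Fin k) : 0 ≤ (Xᵀ * P * X) j j := by
  have key : (fun i => X i j) ⬝ᵥ P *ᵥ (fun i => X i j) = (Xᵀ * P * X) j j := by
    simp only [mul_apply, dotProduct, mulVec, transpose_apply, Finset.mul_sum, Finset.sum_mul]
    rw [Finset.sum_comm]
    apply Finset.sum_congr rfl; intros; apply Finset.sum_congr rfl; intros; ring
  rw [← key]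
  simpa using hP.posSemidef.dotProduct_mulVec_nonneg (fun i => X i j)

theorem trace_conj_nonneg {n : ℕ} (P : Matrix (Fin n) (Fin n) ℝ) (hP : P.PosDef) {k : ℕ}
    (X : Matrix (Fin n) (Fin k) ℝ) : 0 ≤ (Xᵀ * P * X).trace :=
  Finset.sum_nonneg fun j _ => diag_conj_nonneg P hP X j

theorem trace_conj_zero {n : ℕ} (P : Matrix (Fin n) (Fin n) ℝ) (hP : P.PosDef) {k : ℕ}
    (X : Matrix (Fin n) (Fin k) ℝ)
    (h : (Xᵀ * P * X).trace = 0) : X = 0 := by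
  have key : ∀ j, (fun i => X i j) ⬝ᵥ P *ᵥ (fun i => X i j) = (Xᵀ * P * X) j j := by
    intro j
    simp only [mul_apply, dotProduct, mulVec, transpose_apply, Finset.mul_sum, Finset.sum_mul]
    rw [Finset.sum_comm]
    apply Finset.sum_congr rfl; intros; apply Finset.sum_congr rfl; intros; ring
  have hzero : ∀ j, (Xᵀ * P * X) j j = 0 := by
    intro j
    have := Finset.sum_eq_zero_iff_of_nonneg (fun i _ => diag_conj_nonneg P hP X i) |>.mp h
    exact this j (Finset.mem_univ j)
  ext i j
  by_contra hne
  have hv : (fun i => X i j) ≠ 0 := fun h0 => hne (by simpa using congrFun h0 i)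
  have := hP.dotProduct_mulVec_pos hv
  rw [show star (fun i => X i j) = (fun i => X i j) from rfl, key j, hzero j] at this
  simp at this

noncomputable def lyap {m : ℕ} (M : Matrix (Fin m) (Fin m) ℝ) :
    Matrix (Fin m) (Fin m) ℝ →ₗ[ℝ] Matrix (Fin m) (Fin m) ℝ where
  toFun S := M⁻¹ * S + S * M⁻¹
  map_add' a b := by noncomm_ring
  map_smul' r a := by simp [Matrix.mul_smul, Matrix.smul_mul]

theorem lyap_inj {m : ℕ} (M : Matrix (Fin m) (Fin m) ℝ) (hM : M.PosDef) :
    Function.Injective (lyap M) := by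
  have hPinv : (M⁻¹).PosDef := hM.inv
  rw [injective_iff_map_eq_zero]
  intro S hS
  have hS' : M⁻¹ * S + S * M⁻¹ = 0 := hS
  have htr : (Sᵀ * M⁻¹ * S).trace + ((Sᵀ)ᵀ * M⁻¹ * Sᵀ).trace = 0 := by
    have h1 : (Sᵀ * M⁻¹ * S).trace + ((Sᵀ)ᵀ * M⁻¹ * Sᵀ).trace
        = (Sᵀ * (M⁻¹ * S + S * M⁻¹)).trace := by
      rw [Matrix.mul_add, trace_add]
      congr 1
      · rw [Matrix.mul_assoc]
      · rw [transpose_transpose, Matrix.trace_mul_cycle, Matrix.mul_assoc]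
    rw [h1, hS']
    simp
  have h2 := trace_conj_nonneg M⁻¹ hPinv S
  have h3 := trace_conj_nonneg M⁻¹ hPinv Sᵀ
  have : (Sᵀ * M⁻¹ * S).trace = 0 := by linarith
  exact trace_conj_zero M⁻¹ hPinv S this

theorem lyap_surj {m : ℕ} (M : Matrix (Fin m) (Fin m) ℝ) (hM : M.PosDef) :
    Function.Surjective (lyap M) := by
  rw [← LinearMap.injective_iff_surjective]
  exact lyap_inj M hM

/-- Proposition 4.2, matrix level. Let `Sig` be a `d × d` real
symmetric positive definite matrix, `U` a `d × m` matrix with `Uᵀ Sig U = I`, and `M`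
an `m × m` symmetric positive definite matrix. Then: (i) for every `d × m` matrix `η̄`
there is a unique symmetric `S` with `M⁻¹S + SM⁻¹ = Uᵀ Sig η̄ + η̄ᵀ Sig U`;
(ii) `ξ := η̄ − U S M⁻¹` satisfies `Uᵀ Sig ξ + ξᵀ Sig U = 0` (it is tangent to the
generalized Stiefel manifold at `U`); (iii) for every tangent `ζ`
(`Uᵀ Sig ζ + ζᵀ Sig U = 0`), `trace((U S M⁻¹)ᵀ Sig ζ M) = 0`. -/
theorem stmt14 {d m : ℕ} (Sig : Matrix (Fin d) (Fin d) ℝ) (hSig : Sig.PosDef)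
    (U : Matrix (Fin d) (Fin m) ℝ) (hU : Uᵀ * Sig * U = 1)
    (M : Matrix (Fin m) (Fin m) ℝ) (hM : M.PosDef) :
    ∀ ηb : Matrix (Fin d) (Fin m) ℝ,
      (∃! S : Matrix (Fin m) (Fin m) ℝ, Sᵀ = S ∧
        M⁻¹ * S + S * M⁻¹ = Uᵀ * Sig * ηb + ηbᵀ * Sig * U) ∧
      (∀ S : Matrix (Fin m) (Fin m) ℝ, Sᵀ = S →
        M⁻¹ * S + S * M⁻¹ = Uᵀ * Sig * ηb + ηbᵀ * Sig * U →
          (Uᵀ * Sig * (ηb - U * S * M⁻¹) + (ηb - U * S * M⁻¹)ᵀ * Sig * U = 0 ∧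
           ∀ ζ : Matrix (Fin d) (Fin m) ℝ, Uᵀ * Sig * ζ + ζᵀ * Sig * U = 0 →
             ((U * S * M⁻¹)ᵀ * Sig * ζ * M).trace = 0)) := by
  intro ηb
  have hSigT : Sigᵀ = Sig := by simpa using hSig.1.eq
  have hMinvT : (M⁻¹)ᵀ = M⁻¹ := by
    rw [transpose_nonsing_inv]; congr 1; simpa using hM.1.eq
  set A : Matrix (Fin m) (Fin m) ℝ := Uᵀ * Sig * ηb + ηbᵀ * Sig * U with hA
  have hAsym : Aᵀ = A := by
    rw [hA, transpose_add, transpose_mul, transpose_mul, transpose_mul, transpose_mul,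
      transpose_transpose, transpose_transpose, hSigT]
    rw [Matrix.mul_assoc, Matrix.mul_assoc, add_comm]
  constructor
  · -- existence and uniqueness
    obtain ⟨S0, hS0⟩ := lyap_surj M hM A
    refine ⟨(2:ℝ)⁻¹ • (S0 + S0ᵀ), ⟨?_, ?_⟩, ?_⟩
    · rw [transpose_smul, transpose_add, transpose_transpose, add_comm]
    · have h1 : lyap M S0ᵀ = A := by
        have : lyap M S0ᵀ = (lyap M S0)ᵀ := by
          show M⁻¹ * S0ᵀ + S0ᵀ * M⁻¹ = (M⁻¹ * S0 + S0 * M⁻¹)ᵀ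
          rw [transpose_add, transpose_mul, transpose_mul, hMinvT, add_comm]
        rw [this, hS0, hAsym]
      have := map_add (lyap M) S0 S0ᵀ
      have h2 : lyap M ((2:ℝ)⁻¹ • (S0 + S0ᵀ)) = (2:ℝ)⁻¹ • (A + A) := by
        rw [_root_.map_smul, map_add, hS0, h1]
      have h3 : (2:ℝ)⁻¹ • (A + A) = A := by
        rw [smul_add]; module
      have := h2.trans h3
      exact this
    · intro S' ⟨hsymm, heq⟩
      apply lyap_inj M hM
      show M⁻¹ * S' + S' * M⁻¹ = M⁻¹ * ((2:ℝ)⁻¹ • (S0 + S0ᵀ)) + ((2:ℝ)⁻¹ • (S0 + S0ᵀ)) * M⁻¹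
      have h1 : lyap M S0ᵀ = A := by
        have : lyap M S0ᵀ = (lyap M S0)ᵀ := by
          show M⁻¹ * S0ᵀ + S0ᵀ * M⁻¹ = (M⁻¹ * S0 + S0 * M⁻¹)ᵀ
          rw [transpose_add, transpose_mul, transpose_mul, hMinvT, add_comm]
        rw [this, hS0, hAsym]
      have h2 : M⁻¹ * ((2:ℝ)⁻¹ • (S0 + S0ᵀ)) + ((2:ℝ)⁻¹ • (S0 + S0ᵀ)) * M⁻¹
          = (2:ℝ)⁻¹ • (A + A) := by
        have := congrArg₂ (· + ·) hS0 h1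
        simp only [lyap, LinearMap.coe_mk, AddHom.coe_mk] at this hS0 h1
        rw [Matrix.mul_smul, Matrix.smul_mul, Matrix.mul_add, Matrix.add_mul, ← smul_add]
        rw [show M⁻¹ * S0 + M⁻¹ * S0ᵀ + (S0 * M⁻¹ + S0ᵀ * M⁻¹)
            = (M⁻¹ * S0 + S0 * M⁻¹) + (M⁻¹ * S0ᵀ + S0ᵀ * M⁻¹) by abel, hS0, h1]
      rw [h2, heq, smul_add]
      module
  · -- parts (ii) and (iii)
    intro S hsymm heq
    have hT : (U * S * M⁻¹)ᵀ = M⁻¹ * S * Uᵀ := by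
      rw [transpose_mul, transpose_mul, hMinvT, hsymm, Matrix.mul_assoc]
    have hU' : Uᵀ * (Sig * U) = 1 := by rw [← Matrix.mul_assoc]; exact hU
    constructor
    · have e1 : Uᵀ * Sig * (U * S * M⁻¹) = S * M⁻¹ := by
        calc Uᵀ * Sig * (U * S * M⁻¹) = (Uᵀ * Sig * U) * (S * M⁻¹) := by
              simp only [Matrix.mul_assoc]
          _ = S * M⁻¹ := by rw [hU, Matrix.one_mul]
      have e2 : (U * S * M⁻¹)ᵀ * Sig * U = M⁻¹ * S := by
        rw [hT]
        calc M⁻¹ * S * Uᵀ * Sig * U = (M⁻¹ * S) * (Uᵀ * Sig * U) := by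
              simp only [Matrix.mul_assoc]
          _ = M⁻¹ * S := by rw [hU, Matrix.mul_one]
      rw [Matrix.mul_sub, transpose_sub, Matrix.sub_mul, Matrix.sub_mul, e1, e2]
      rw [sub_add_sub_comm, ← hA, ← heq, add_comm (M⁻¹ * S), sub_self]
    · intro ζ hζ
      have hMdet : IsUnit M.det := (ne_of_gt hM.det_pos).isUnit
      have hMM : M * M⁻¹ = 1 := Matrix.mul_nonsing_inv M hMdet
      set T : Matrix (Fin m) (Fin m) ℝ := Uᵀ * Sig * ζ with hTdef
      have hTT : Tᵀ = -T := by
        have h1 : Tᵀ = ζᵀ * Sig * U := by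
          rw [hTdef, transpose_mul, transpose_mul, transpose_transpose, hSigT,
            Matrix.mul_assoc]
        have h2 : T + ζᵀ * Sig * U = 0 := hζ
        rw [h1]
        exact eq_neg_of_add_eq_zero_right h2
      have key : ((U * S * M⁻¹)ᵀ * Sig * ζ * M).trace = (S * T).trace := by
        rw [hT]
        have : M⁻¹ * S * Uᵀ * Sig * ζ * M = M⁻¹ * (S * (Uᵀ * Sig * ζ) * M) := by
          simp only [Matrix.mul_assoc]
        rw [this, Matrix.trace_mul_comm, Matrix.mul_assoc, Matrix.mul_assoc, hMM]
        rw [← hTdef]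
        simp [Matrix.mul_assoc]
      rw [key]
      have h1 : (S * T).trace = ((S * T)ᵀ).trace := (Matrix.trace_transpose _).symm
      have h2 : (S * T)ᵀ = -(T * S) := by rw [transpose_mul, hTT, hsymm, neg_mul]
      have h3 : (T * S).trace = (S * T).trace := Matrix.trace_mul_comm T S
      rw [h2, trace_neg, h3] at h1
      linarith
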